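/- Let A be a complex Banach algebra with a character φ. Suppose there exists a closed left ideal J of A (a closed linear subspace with a·j ∈ J for all a ∈ A and j ∈ J) such that φ|_J is not identically zero and the Banach algebra J is φ|_J-amenable. Then A is φ-amenable. -/

import Mathlib

set_option maxHeartbeats 2000000


/-- A (possibly non-unital) complex Banach algebra `A` with a character `φ` is
`φ`-amenable if there is `m ∈ A**` with `m(φ) = 1` and `a·m = φ(a)·m` for all `a ∈ A`,
where `(a·m)(f) = m(f·a)` and `(f·a)(b) = f(ab)`. -/
def PhiAmenable (A : Type*) [NonUnitalNormedRing A] [NormedSpace ℂ A] [IsScalarTower ℂ A A]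
    [SMulCommClass ℂ A A] (φ : A →L[ℂ] ℂ) : Prop :=
  ∃ m : (A →L[ℂ] ℂ) →L[ℂ] ℂ, m φ = 1 ∧
    ∀ (a : A) (f : A →L[ℂ] ℂ), m (f.comp (ContinuousLinearMap.mul ℂ A a)) = φ a * m f

noncomputable instance NonUnitalSubalgebra.complexNormedSpace {A : Type*} [NonUnitalNormedRing A]
    [NormedSpace ℂ A] (J : NonUnitalSubalgebra ℂ A) : NormedSpace ℂ J :=
  SubmoduleClass.toNormedSpace (R := ℂ) J

/-- If a complex Banach algebra `A` with character `φ` has a closed left ideal `J`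
on which `φ` does not vanish identically such that `J` is `φ|_J`-amenable, then `A`
is `φ`-amenable. -/
theorem phiAmenable_of_phiAmenable_closed_left_ideal (A : Type*) [NonUnitalNormedRing A]
    [NormedSpace ℂ A] [IsScalarTower ℂ A A] [SMulCommClass ℂ A A] [CompleteSpace A]
    (φ : A →L[ℂ] ℂ) (hφmul : ∀ a b : A, φ (a * b) = φ a * φ b) (hφne : φ ≠ 0)
    (J : NonUnitalSubalgebra ℂ A) (hJclosed : IsClosed (J : Set A))
    (hJideal : ∀ a : A, ∀ j ∈ J, a * j ∈ J)
    (hφJ : ∃ j ∈ J, φ j ≠ 0)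
    (hJ : PhiAmenable ↥J (φ.comp J.toSubmodule.subtypeL)) :
    PhiAmenable A φ := by
  obtain ⟨j, hjJ, hjne⟩ := hφJ
  -- normalize to get j₀ ∈ J with φ j₀ = 1
  set j₀ : A := (φ j)⁻¹ • j with hj₀def
  have hj₀J : j₀ ∈ J := J.smul_mem (φ j)⁻¹ hjJ
  have hφj₀ : φ j₀ = 1 := by
    simp [hj₀def, inv_mul_cancel₀ hjne]
  set j₀' : ↥J := ⟨j₀, hj₀J⟩ with hj₀'def
  obtain ⟨mJ, hmJ1, hmJ2⟩ := hJ
  set ψ : ↥J →L[ℂ] ℂ := φ.comp J.toSubmodule.subtypeL with hψdef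
  have hψ : ∀ x : ↥J, ψ x = φ (x : A) := fun x => rfl
  -- S f = (j ↦ f (j₀ * j)) : J →L ℂ, continuous-linearly in f
  set S : (A →L[ℂ] ℂ) →L[ℂ] (↥J →L[ℂ] ℂ) :=
    ((ContinuousLinearMap.compL ℂ ↥J A ℂ).flip J.toSubmodule.subtypeL).comp
      ((ContinuousLinearMap.compL ℂ A A ℂ).flip (ContinuousLinearMap.mul ℂ A j₀)) with hSdef
  have hS : ∀ (f : A →L[ℂ] ℂ) (x : ↥J), S f x = f (j₀ * (x : A)) := fun f x => rfl
  refine ⟨mJ.comp S, ?_, ?_⟩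
  · have : S φ = ψ := by
      ext x
      rw [hS, hψ, hφmul, hφj₀, one_mul]
    simp [this, hmJ1]
  · intro a f
    -- the restriction of f to J
    set g : ↥J →L[ℂ] ℂ := f.comp J.toSubmodule.subtypeL with hgdef
    have haj₀ : a * j₀ ∈ J := hJideal a j₀ hj₀J
    set aj₀ : ↥J := ⟨a * j₀, haj₀⟩ with haj₀def
    have h1 : S (f.comp (ContinuousLinearMap.mul ℂ A a)) =
        g.comp (ContinuousLinearMap.mul ℂ ↥J aj₀) := by
      ext x
      rw [hS]
      simp only [ContinuousLinearMap.comp_apply, ContinuousLinearMap.mul_apply', hgdef,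
        Submodule.subtypeL_apply, haj₀def, MulMemClass.coe_mul]
      rw [← mul_assoc]
      rfl
    have h2 : S f = g.comp (ContinuousLinearMap.mul ℂ ↥J j₀') := by
      ext x
      rw [hS]
      simp only [ContinuousLinearMap.comp_apply, ContinuousLinearMap.mul_apply', hgdef,
        Submodule.subtypeL_apply, hj₀'def, MulMemClass.coe_mul]
      rfl
    simp only [ContinuousLinearMap.comp_apply, h1, h2, hmJ2]
    rw [hψ, hψ]
    simp only [haj₀def, hj₀'def]
    rw [hφmul, hφj₀]
    ring
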